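/- arXiv:2103.09953 — 7 statements merged into one kernel-verified Lean document; each statement's English description precedes it below -/
import Mathlib

section
/- Let q : ℝ → ℂ, let λ ∈ {-1, 1}, set r(x) = λ · conj(q(x)), let σ ∈ ℂ satisfy σ² = λ, and let k ∈ ℂ. Set T = [[0, σ⁻¹], [σ, 0]] (a 2×2 complex matrix, which satisfies T = T⁻¹). If μ : ℝ → Matrix (Fin 2) (Fin 2) ℂ is differentiable and satisfies μ'(x) = [[-i·conj(k), q(x)], [r(x), i·conj(k)]] · μ(x) for all x ∈ ℝ, then the function μ̌(x) := T · conj(μ(x)) · T (entrywise complex conjugate) is differentiable and satisfies μ̌'(x) = [[-i·k, q(x)], [r(x), i·k]] · μ̌(x) for all x ∈ ℝ. -/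
open Complex Matrix

/-- Symmetry lemma for the AKNS system when `r = λ · conj q`:
if `μ` solves the system with spectral parameter `conj k`, then
`μ̌(x) = T · conj(μ(x)) · T` (entrywise conjugate) solves it with parameter `k`. -/
theorem akns_conjugation_symmetry
    (q : ℝ → ℂ) (lam : ℂ) (hlam : lam = -1 ∨ lam = 1)
    (r : ℝ → ℂ) (hr : ∀ x, r x = lam * (starRingEnd ℂ) (q x))
    (σ : ℂ) (hσ : σ ^ 2 = lam) (k : ℂ)
    (μ : ℝ → Matrix (Fin 2) (Fin 2) ℂ)
    (hμ : ∀ x i j, HasDerivAt (fun y => μ y i j)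
      ((!![-Complex.I * (starRingEnd ℂ) k, q x;
           r x, Complex.I * (starRingEnd ℂ) k] * μ x) i j) x) :
    ∀ x i j, HasDerivAt
      (fun y => (!![0, σ⁻¹; σ, 0] * (μ y).map (starRingEnd ℂ) * !![0, σ⁻¹; σ, 0]) i j)
      ((!![-Complex.I * k, q x; r x, Complex.I * k] *
        (!![0, σ⁻¹; σ, 0] * (μ x).map (starRingEnd ℂ) * !![0, σ⁻¹; σ, 0])) i j) x := by
  intro x i j
  have hlam2 : lam * lam = 1 := by rcases hlam with h | h <;> simp [h]
  have hlamc : (starRingEnd ℂ) lam = lam := by rcases hlam with h | h <;> simp [h]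
  have hσ0 : σ ≠ 0 := by
    intro h; rcases hlam with h' | h' <;> rw [h, h'] at hσ <;> norm_num at hσ
  have hinv : σ⁻¹ = lam * σ :=
    inv_eq_of_mul_eq_one_right (by linear_combination lam * hσ + hlam2)
  have key : ∀ a b, HasDerivAt (fun y => (starRingEnd ℂ) (μ y a b))
      ((starRingEnd ℂ) ((!![-Complex.I * (starRingEnd ℂ) k, q x;
           r x, Complex.I * (starRingEnd ℂ) k] * μ x) a b)) x :=
    fun a b => (hμ x a b).star
  fin_cases i <;> fin_cases j
  · show HasDerivAt
      (fun y => (!![0, σ⁻¹; σ, 0] * (μ y).map (starRingEnd ℂ) * !![0, σ⁻¹; σ, 0]) 0 0)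
      ((!![-Complex.I * k, q x; r x, Complex.I * k] *
        (!![0, σ⁻¹; σ, 0] * (μ x).map (starRingEnd ℂ) * !![0, σ⁻¹; σ, 0])) 0 0) x
    have hfun : (fun y => (!![0, σ⁻¹; σ, 0] * (μ y).map (starRingEnd ℂ) * !![0, σ⁻¹; σ, 0]) 0 0)
        = fun y => σ⁻¹ * (starRingEnd ℂ) (μ y 1 1) * σ := by
      funext y; simp [Matrix.mul_apply, Fin.sum_univ_two, Matrix.vecMul, dotProduct]
    rw [hfun]
    convert ((key 1 1).const_mul σ⁻¹).mul_const σ using 1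
    · rfl
    simp [Matrix.mul_apply, Fin.sum_univ_two, Matrix.vecMul, dotProduct, hr, hlamc, hinv]
    ring_nf
    linear_combination (-(σ^2 * q x * (starRingEnd ℂ) (μ x 0 1))) * hlam2
  · show HasDerivAt
      (fun y => (!![0, σ⁻¹; σ, 0] * (μ y).map (starRingEnd ℂ) * !![0, σ⁻¹; σ, 0]) 0 1)
      ((!![-Complex.I * k, q x; r x, Complex.I * k] *
        (!![0, σ⁻¹; σ, 0] * (μ x).map (starRingEnd ℂ) * !![0, σ⁻¹; σ, 0])) 0 1) x
    have hfun : (fun y => (!![0, σ⁻¹; σ, 0] * (μ y).map (starRingEnd ℂ) * !![0, σ⁻¹; σ, 0]) 0 1)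
        = fun y => σ⁻¹ * (starRingEnd ℂ) (μ y 1 0) * σ⁻¹ := by
      funext y; simp [Matrix.mul_apply, Fin.sum_univ_two, Matrix.vecMul, dotProduct]
    rw [hfun]
    convert ((key 1 0).const_mul σ⁻¹).mul_const σ⁻¹ using 1
    · rfl
    simp [Matrix.mul_apply, Fin.sum_univ_two, Matrix.vecMul, dotProduct, hr, hlamc, hinv]
    ring_nf
    linear_combination (-(lam * σ^2 * q x * (starRingEnd ℂ) (μ x 0 0))) * hlam2
  · show HasDerivAt
      (fun y => (!![0, σ⁻¹; σ, 0] * (μ y).map (starRingEnd ℂ) * !![0, σ⁻¹; σ, 0]) 1 0)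
      ((!![-Complex.I * k, q x; r x, Complex.I * k] *
        (!![0, σ⁻¹; σ, 0] * (μ x).map (starRingEnd ℂ) * !![0, σ⁻¹; σ, 0])) 1 0) x
    have hfun : (fun y => (!![0, σ⁻¹; σ, 0] * (μ y).map (starRingEnd ℂ) * !![0, σ⁻¹; σ, 0]) 1 0)
        = fun y => σ * (starRingEnd ℂ) (μ y 0 1) * σ := by
      funext y; simp [Matrix.mul_apply, Fin.sum_univ_two, Matrix.vecMul, dotProduct]
    rw [hfun]
    convert ((key 0 1).const_mul σ).mul_const σ using 1
    · rfl
    simp [Matrix.mul_apply, Fin.sum_univ_two, Matrix.vecMul, dotProduct, hr, hlamc, hinv]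
    ring_nf
    linear_combination (σ^2 * (starRingEnd ℂ) (q x) * (starRingEnd ℂ) (μ x 1 1)) * hlam2
  · show HasDerivAt
      (fun y => (!![0, σ⁻¹; σ, 0] * (μ y).map (starRingEnd ℂ) * !![0, σ⁻¹; σ, 0]) 1 1)
      ((!![-Complex.I * k, q x; r x, Complex.I * k] *
        (!![0, σ⁻¹; σ, 0] * (μ x).map (starRingEnd ℂ) * !![0, σ⁻¹; σ, 0])) 1 1) x
    have hfun : (fun y => (!![0, σ⁻¹; σ, 0] * (μ y).map (starRingEnd ℂ) * !![0, σ⁻¹; σ, 0]) 1 1)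
        = fun y => σ * (starRingEnd ℂ) (μ y 0 0) * σ⁻¹ := by
      funext y; simp [Matrix.mul_apply, Fin.sum_univ_two, Matrix.vecMul, dotProduct]
    rw [hfun]
    convert ((key 0 0).const_mul σ).mul_const σ⁻¹ using 1
    · rfl
    simp [Matrix.mul_apply, Fin.sum_univ_two, Matrix.vecMul, dotProduct, hr, hlamc, hinv]
    ring_nf
    linear_combination (lam * σ^2 * (starRingEnd ℂ) (q x) * (starRingEnd ℂ) (μ x 1 0)) * hlam2
end

section
/- Let q : ℝ → ℂ, λ ∈ {-1, 1}, r(x) = λ · conj(q(x)), and let k ∈ ℝ. Suppose μ : ℝ → Matrix (Fin 2) (Fin 2) ℂ is differentiable, satisfies the AKNS system μ'(x) = [[-i k, q(x)], [r(x), i k]] · μ(x) for all x, and satisfies the normalization lim_{x → -∞} μ(x) · E_k(x) = I (entrywise limit), where E_k(x) = diag(e^{i k x}, e^{-i k x}). Suppose further that the limit S := lim_{x → +∞} E_k(x) · μ(x) exists (entrywise), and assume uniqueness of the normalized solution: any two differentiable solutions ν of this system with lim_{x → -∞} ν(x) · E_k(x) = I are equal. Then the entries of S satisfy S₂₂ =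 conj(S₁₁) and S₁₂ = λ · conj(S₂₁). -/
open Complex Matrix Filter Topology

/-- Symmetry of the scattering matrix for the AKNS system with `r = λ · conj q`, `λ = ±1`,
and real spectral parameter `k`: writing `S = [[a, B], [b, A]]`, one has
`A = conj a` and `B = λ · conj b`, i.e. `S₂₂ = conj S₁₁` and `S₁₂ = λ · conj S₂₁`. -/
theorem akns_scattering_matrix_symmetry
    (q : ℝ → ℂ) (lam : ℂ) (hlam : lam = -1 ∨ lam = 1)
    (r : ℝ → ℂ) (hr : ∀ x, r x = lam * (starRingEnd ℂ) (q x)) (k : ℝ)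
    (μ : ℝ → Matrix (Fin 2) (Fin 2) ℂ) (S : Matrix (Fin 2) (Fin 2) ℂ)
    (hode : ∀ x i j, HasDerivAt (fun y => μ y i j)
      ((!![-Complex.I * (k : ℂ), q x; r x, Complex.I * (k : ℂ)] * μ x) i j) x)
    (hnorm : ∀ i j, Tendsto (fun x : ℝ =>
      (μ x * !![Complex.exp (Complex.I * k * x), 0;
                0, Complex.exp (-(Complex.I * k * x))]) i j)
      atBot (𝓝 ((1 : Matrix (Fin 2) (Fin 2) ℂ) i j)))
    (hS : ∀ i j, Tendsto (fun x : ℝ =>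
      (!![Complex.exp (Complex.I * k * x), 0;
          0, Complex.exp (-(Complex.I * k * x))] * μ x) i j)
      atTop (𝓝 (S i j)))
    (huniq : ∀ ν : ℝ → Matrix (Fin 2) (Fin 2) ℂ,
      (∀ x i j, HasDerivAt (fun y => ν y i j)
        ((!![-Complex.I * (k : ℂ), q x; r x, Complex.I * (k : ℂ)] * ν x) i j) x) →
      (∀ i j, Tendsto (fun x : ℝ =>
        (ν x * !![Complex.exp (Complex.I * k * x), 0;
                  0, Complex.exp (-(Complex.I * k * x))]) i j)
        atBot (𝓝 ((1 : Matrix (Fin 2) (Fin 2) ℂ) i j))) → ν = μ) :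
    S 1 1 = (starRingEnd ℂ) (S 0 0) ∧ S 0 1 = lam * (starRingEnd ℂ) (S 1 0) := by
  have hlam2 : lam * lam = 1 := by rcases hlam with h | h <;> simp [h]
  have hlamc : (starRingEnd ℂ) lam = lam := by rcases hlam with h | h <;> simp [h]
  have hec : ∀ x : ℝ, (starRingEnd ℂ) (Complex.exp (Complex.I * k * x))
      = Complex.exp (-(Complex.I * k * x)) := by
    intro x
    rw [← Complex.exp_conj]
    congr 1
    simp [_root_.map_mul, Complex.conj_I, Complex.conj_ofReal]
  have hec' : ∀ x : ℝ, (starRingEnd ℂ) (Complex.exp (-(Complex.I * k * x)))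
      = Complex.exp (Complex.I * k * x) := by
    intro x
    rw [← Complex.exp_conj]
    congr 1
    simp [_root_.map_mul, Complex.conj_I, Complex.conj_ofReal]
  set c := starRingEnd ℂ with hc
  set ν : ℝ → Matrix (Fin 2) (Fin 2) ℂ := fun x =>
    !![c (μ x 1 1), lam * c (μ x 1 0); lam * c (μ x 0 1), c (μ x 0 0)] with hν
  have hμν : ν = μ := by
    apply huniq
    · intro x i j
      fin_cases i <;> fin_cases j
      · have h := (hode x 1 1).star
        have hf : (fun y => star (μ y 1 1)) = (fun y => ν y 0 0) := by
          funext y; simp [hν, hc]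
        rw [hf] at h
        refine h.congr_deriv ?_
        simp [hν, hc, Matrix.mul_apply, Fin.sum_univ_two, hr, _root_.map_mul, map_add,
          Complex.conj_I, Complex.conj_ofReal, hc ▸ hlamc, RCLike.star_def]
        ring
      · have h := (hode x 1 0).star.const_mul lam
        have hf : (fun y => lam * star (μ y 1 0)) = (fun y => ν y 0 1) := by
          funext y; simp [hν, hc]
        rw [hf] at h
        refine h.congr_deriv ?_
        simp [hν, hc, Matrix.mul_apply, Fin.sum_univ_two, hr, _root_.map_mul, map_add,
          Complex.conj_I, Complex.conj_ofReal, hc ▸ hlamc, RCLike.star_def]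
        ring_nf
        rw [show lam ^ 2 = 1 by rw [sq, hlam2]]
        ring
      · have h := (hode x 0 1).star.const_mul lam
        have hf : (fun y => lam * star (μ y 0 1)) = (fun y => ν y 1 0) := by
          funext y; simp [hν, hc]
        rw [hf] at h
        refine h.congr_deriv ?_
        simp [hν, hc, Matrix.mul_apply, Fin.sum_univ_two, hr, _root_.map_mul, map_add,
          Complex.conj_I, Complex.conj_ofReal, hc ▸ hlamc, RCLike.star_def]
        ring
      · have h := (hode x 0 0).star
        have hf : (fun y => star (μ y 0 0)) = (fun y => ν y 1 1) := by
          funext y; simp [hν, hc]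
        rw [hf] at h
        refine h.congr_deriv ?_
        simp [hν, hc, Matrix.mul_apply, Fin.sum_univ_two, hr, _root_.map_mul, map_add,
          Complex.conj_I, Complex.conj_ofReal, hc ▸ hlamc, RCLike.star_def]
        ring_nf
        rw [show lam ^ 2 = 1 by rw [sq, hlam2]]
        ring
    · intro i j
      fin_cases i <;> fin_cases j
      · have h := (Complex.continuous_conj.tendsto _).comp (hnorm 1 1)
        have hf : ((starRingEnd ℂ) ∘ fun x : ℝ =>
            (μ x * !![Complex.exp (Complex.I * k * x), 0;
              0, Complex.exp (-(Complex.I * k * x))]) 1 1)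
            = fun x : ℝ => (ν x * !![Complex.exp (Complex.I * k * x), 0;
              0, Complex.exp (-(Complex.I * k * x))]) 0 0 := by
          funext x
          simp [hν, hc, Matrix.mul_apply, Fin.sum_univ_two, _root_.map_mul, hc ▸ hec']
        rw [hf] at h
        simpa using h
      · have h := ((Complex.continuous_conj.tendsto _).comp (hnorm 1 0)).const_mul lam
        have hf : (fun x : ℝ => lam * ((starRingEnd ℂ) ∘ fun x : ℝ =>
            (μ x * !![Complex.exp (Complex.I * k * x), 0;
              0, Complex.exp (-(Complex.I * k * x))]) 1 0) x)
            = fun x : ℝ => (ν x * !![Complex.exp (Complex.I * k * x), 0;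
              0, Complex.exp (-(Complex.I * k * x))]) 0 1 := by
          funext x
          simp [hν, hc, Matrix.mul_apply, Fin.sum_univ_two, _root_.map_mul, hc ▸ hec]
          ring
        rw [hf] at h
        simpa using h
      · have h := ((Complex.continuous_conj.tendsto _).comp (hnorm 0 1)).const_mul lam
        have hf : (fun x : ℝ => lam * ((starRingEnd ℂ) ∘ fun x : ℝ =>
            (μ x * !![Complex.exp (Complex.I * k * x), 0;
              0, Complex.exp (-(Complex.I * k * x))]) 0 1) x)
            = fun x : ℝ => (ν x * !![Complex.exp (Complex.I * k * x), 0;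
              0, Complex.exp (-(Complex.I * k * x))]) 1 0 := by
          funext x
          simp [hν, hc, Matrix.mul_apply, Fin.sum_univ_two, _root_.map_mul, hc ▸ hec']
          ring
        rw [hf] at h
        simpa using h
      · have h := (Complex.continuous_conj.tendsto _).comp (hnorm 0 0)
        have hf : ((starRingEnd ℂ) ∘ fun x : ℝ =>
            (μ x * !![Complex.exp (Complex.I * k * x), 0;
              0, Complex.exp (-(Complex.I * k * x))]) 0 0)
            = fun x : ℝ => (ν x * !![Complex.exp (Complex.I * k * x), 0;
              0, Complex.exp (-(Complex.I * k * x))]) 1 1 := by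
          funext x
          simp [hν, hc, Matrix.mul_apply, Fin.sum_univ_two, _root_.map_mul, hc ▸ hec]
        rw [hf] at h
        simpa using h
  constructor
  · have h1 := hS 0 0
    have h2 := (Complex.continuous_conj.tendsto _).comp (hS 1 1)
    have heq : ((starRingEnd ℂ) ∘ fun x : ℝ => ((!![Complex.exp (Complex.I * k * x), 0;
          0, Complex.exp (-(Complex.I * k * x))] * μ x) 1 1))
        = fun x : ℝ => (!![Complex.exp (Complex.I * k * x), 0;
          0, Complex.exp (-(Complex.I * k * x))] * μ x) 0 0 := by
      funext x
      have hx := congrFun (congrFun (congrFun hμν x) 0) 0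
      simp [hν, hc] at hx
      simp [hc, Matrix.mul_apply, Fin.sum_univ_two, _root_.map_mul, hc ▸ hec', ← hx]
    rw [heq] at h2
    have := tendsto_nhds_unique h1 h2
    rw [this]
    simp
  · have h1 := hS 0 1
    have h2 := ((Complex.continuous_conj.tendsto _).comp (hS 1 0)).const_mul lam
    have heq : (fun x : ℝ => lam * ((starRingEnd ℂ) ∘ fun x : ℝ =>
          ((!![Complex.exp (Complex.I * k * x), 0;
          0, Complex.exp (-(Complex.I * k * x))] * μ x) 1 0)) x)
        = fun x : ℝ => (!![Complex.exp (Complex.I * k * x), 0;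
          0, Complex.exp (-(Complex.I * k * x))] * μ x) 0 1 := by
      funext x
      have hx := congrFun (congrFun (congrFun hμν x) 0) 1
      simp [hν, hc] at hx
      simp [hc, Matrix.mul_apply, Fin.sum_univ_two, _root_.map_mul, hc ▸ hec', ← hx]
      ring
    rw [heq] at h2
    exact (tendsto_nhds_unique h2 h1).symm
end

section
/- Let q, r : ℝ → ℂ, k ∈ ℂ, and J = [[0, -1], [1, 0]]. If μ : ℝ → Matrix (Fin 2) (Fin 2) ℂ is differentiable and satisfies the AKNS system μ'(x) = [[-i k, q(x)], [r(x), i k]] · μ(x) for all x ∈ ℝ, then the function μ̌(x) := J · μ(-x) · J⁻¹ is differentiable and satisfies μ̌'(x) = [[-i k, r(-x)], [q(-x), i k]] · μ̌(x) for all x ∈ ℝ, i.e., μ̌ solves the AKNS system with the same spectral parameter k and with potentials x ↦ r(-x) and x ↦ q(-x). Moreover, if k ∈ ℝ and lim_{x → +∞} μ(x) · E_k(x) = I (entrywise), then lim_{x → -∞} μ̌(x) · E_k(x) = I, where E_k(x) = diag(e^{i k x}, e^{-i k x}). -/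
open Complex Matrix Filter Topology

lemma check_eq (A : Matrix (Fin 2) (Fin 2) ℂ) :
    (!![0, -1; 1, 0] : Matrix (Fin 2) (Fin 2) ℂ) * A *
      (!![0, -1; 1, 0] : Matrix (Fin 2) (Fin 2) ℂ)⁻¹ =
    !![A 1 1, -(A 1 0); -(A 0 1), A 0 0] := by
  have hJ : (!![0, -1; 1, 0] : Matrix (Fin 2) (Fin 2) ℂ)⁻¹ = !![0, 1; -1, 0] := by
    apply Matrix.inv_eq_right_inv
    ext i j
    fin_cases i <;> fin_cases j <;> simp [Matrix.mul_apply, Fin.sum_univ_two]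
  rw [hJ]
  ext i j
  fin_cases i <;> fin_cases j <;>
    simp [Matrix.mul_apply, Matrix.vecMul, dotProduct, Fin.sum_univ_two]

/-- The reflection symmetry of the AKNS system: if `μ` solves the system with
potentials `(q, r)` and parameter `k`, then `μ̌(x) = J μ(-x) J⁻¹`, `J = [[0,-1],[1,0]]`,
solves it with potentials `(r(-·), q(-·))` and the same `k`; moreover, for real `k`,
the normalization at `+∞` for `μ` becomes the normalization at `-∞` for `μ̌`. -/
theorem akns_reflection_symmetry
    (q r : ℝ → ℂ) (k : ℂ)
    (μ : ℝ → Matrix (Fin 2) (Fin 2) ℂ)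
    (hμ : ∀ x i j, HasDerivAt (fun y => μ y i j)
      ((!![-Complex.I * k, q x; r x, Complex.I * k] * μ x) i j) x) :
    (∀ x i j, HasDerivAt
      (fun y => ((!![0, -1; 1, 0] : Matrix (Fin 2) (Fin 2) ℂ) * μ (-y) *
        (!![0, -1; 1, 0] : Matrix (Fin 2) (Fin 2) ℂ)⁻¹) i j)
      ((!![-Complex.I * k, r (-x); q (-x), Complex.I * k] *
        ((!![0, -1; 1, 0] : Matrix (Fin 2) (Fin 2) ℂ) * μ (-x) *
          (!![0, -1; 1, 0] : Matrix (Fin 2) (Fin 2) ℂ)⁻¹)) i j) x) ∧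
    (k.im = 0 →
      (∀ i j, Tendsto (fun x : ℝ =>
        (μ x * !![Complex.exp (Complex.I * k * x), 0;
                  0, Complex.exp (-(Complex.I * k * x))]) i j)
        atTop (𝓝 ((1 : Matrix (Fin 2) (Fin 2) ℂ) i j))) →
      (∀ i j, Tendsto (fun x : ℝ =>
        (((!![0, -1; 1, 0] : Matrix (Fin 2) (Fin 2) ℂ) * μ (-x) *
          (!![0, -1; 1, 0] : Matrix (Fin 2) (Fin 2) ℂ)⁻¹) *
          !![Complex.exp (Complex.I * k * x), 0;
             0, Complex.exp (-(Complex.I * k * x))]) i j)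
        atBot (𝓝 ((1 : Matrix (Fin 2) (Fin 2) ℂ) i j)))) := by
  constructor
  · intro x i j
    have d : ∀ i j, HasDerivAt (fun y => μ (-y) i j)
        (-((!![-Complex.I * k, q (-x); r (-x), Complex.I * k] * μ (-x)) i j)) x := by
      intro i j
      have h1 := hμ (-x) i j
      have h2 : HasDerivAt (fun y : ℝ => -y) (-1 : ℝ) x := hasDerivAt_neg x
      simpa [Function.comp_def] using HasDerivAt.scomp x h1 h2
    simp only [check_eq]
    fin_cases i <;> fin_cases j
    · convert d 1 1 using 1
      · rfl
      simp [Matrix.mul_apply, Fin.sum_univ_two]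
      try ring
    · convert (d 1 0).neg using 1
      · rfl
      · funext y; rfl
      simp [Matrix.mul_apply, Fin.sum_univ_two]
      try ring
    · convert (d 0 1).neg using 1
      · rfl
      · funext y; rfl
      simp [Matrix.mul_apply, Fin.sum_univ_two]
      try ring
    · convert d 0 0 using 1
      · rfl
      simp [Matrix.mul_apply, Fin.sum_univ_two]
      try ring
  · intro _ h i j
    have hneg : Tendsto (fun x : ℝ => -x) atBot atTop := tendsto_neg_atBot_atTop
    simp only [check_eq]
    fin_cases i <;> fin_cases j
    · simpa [Matrix.mul_apply, Fin.sum_univ_two, Function.comp_def, Matrix.one_apply,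
        Complex.ofReal_neg, mul_neg, neg_neg] using (h 1 1).comp hneg
    · simpa [Matrix.mul_apply, Fin.sum_univ_two, Function.comp_def, Matrix.one_apply,
        Complex.ofReal_neg, mul_neg, neg_neg] using ((h 1 0).comp hneg).neg
    · simpa [Matrix.mul_apply, Fin.sum_univ_two, Function.comp_def, Matrix.one_apply,
        Complex.ofReal_neg, mul_neg, neg_neg] using ((h 0 1).comp hneg).neg
    · simpa [Matrix.mul_apply, Fin.sum_univ_two, Function.comp_def, Matrix.one_apply,
        Complex.ofReal_neg, mul_neg, neg_neg] using (h 0 0).comp hneg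
end

section
/- Fix ν > 0, α ∈ ℝ, and j ∈ ℤ, and for ω ∈ ℂ \ {iν, -iν} set R_{j,α}(ω) = e^{i α ω} · (((ω − iν)/(ω + iν))^j − 1) (integer power, zpow for negative j). Then for every ω ∈ ℂ \ {iν, -iν}, the complex derivative of R_{j,α} at ω satisfies R_{j,α}'(ω) = (i/ν) · ( −(j/2) · R_{j+1,α}(ω) + (j + α ν) · R_{j,α}(ω) − (j/2) · R_{j−1,α}(ω) ). -/
/-- The oscillatory rational basis function `R_{j,α}`. -/
noncomputable def oscR (ν α : ℝ) (j : ℤ) (ω : ℂ) : ℂ :=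
  Complex.exp (Complex.I * (α : ℂ) * ω) *
    (((ω - Complex.I * (ν : ℂ)) / (ω + Complex.I * (ν : ℂ))) ^ j - 1)

/-- Tridiagonal differentiation identity for the oscillatory rational basis:
`R_{j,α}' = (i/ν)·(−(j/2) R_{j+1,α} + (j + αν) R_{j,α} − (j/2) R_{j−1,α})`. -/
theorem oscR_hasDerivAt (ν : ℝ) (hν : 0 < ν) (α : ℝ) (j : ℤ) :
    ∀ ω : ℂ, ω ≠ Complex.I * (ν : ℂ) → ω ≠ -(Complex.I * (ν : ℂ)) →
      HasDerivAt (oscR ν α j)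
        ((Complex.I / (ν : ℂ)) *
          (-((j : ℂ) / 2) * oscR ν α (j + 1) ω + ((j : ℂ) + (α : ℂ) * (ν : ℂ)) * oscR ν α j ω
            - ((j : ℂ) / 2) * oscR ν α (j - 1) ω)) ω := by
  intro ω h1 h2
  have hν' : (ν : ℂ) ≠ 0 := by exact_mod_cast hν.ne'
  have hd : ω + Complex.I * (ν : ℂ) ≠ 0 := by
    intro h; apply h2; linear_combination h
  have hn : ω - Complex.I * (ν : ℂ) ≠ 0 := by
    intro h; apply h1; linear_combination h
  set g : ℂ := (ω - Complex.I * (ν : ℂ)) / (ω + Complex.I * (ν : ℂ)) with hg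
  have hgne : g ≠ 0 := div_ne_zero hn hd
  -- derivative of the rational map
  have hnum : HasDerivAt (fun z : ℂ => z - Complex.I * (ν : ℂ)) 1 ω :=
    (hasDerivAt_id ω).sub_const _
  have hden : HasDerivAt (fun z : ℂ => z + Complex.I * (ν : ℂ)) 1 ω :=
    (hasDerivAt_id ω).add_const _
  have hrat : HasDerivAt (fun z : ℂ => (z - Complex.I * (ν : ℂ)) / (z + Complex.I * (ν : ℂ)))
      ((1 * (ω + Complex.I * (ν : ℂ)) - (ω - Complex.I * (ν : ℂ)) * 1) /
        (ω + Complex.I * (ν : ℂ)) ^ 2) ω := hnum.div hden hd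
  have hpow : HasDerivAt
      (fun z : ℂ => ((z - Complex.I * (ν : ℂ)) / (z + Complex.I * (ν : ℂ))) ^ j - 1)
      ((j : ℂ) * g ^ (j - 1) *
        ((1 * (ω + Complex.I * (ν : ℂ)) - (ω - Complex.I * (ν : ℂ)) * 1) /
          (ω + Complex.I * (ν : ℂ)) ^ 2)) ω :=
    by simpa [Function.comp] using
      (((hasDerivAt_zpow j g (Or.inl hgne)).comp ω hrat)).sub_const 1
  have hexp : HasDerivAt (fun z : ℂ => Complex.exp (Complex.I * (α : ℂ) * z))
      (Complex.I * (α : ℂ) * Complex.exp (Complex.I * (α : ℂ) * ω)) ω := by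
    simpa [mul_comm] using (((hasDerivAt_id ω).const_mul (Complex.I * (α : ℂ))).cexp)
  have hD := hexp.mul hpow
  convert hD using 1
  · rfl
  · rfl
  · rfl
  simp only [oscR]
  rw [zpow_add_one₀ hgne, zpow_sub_one₀ hgne]
  set E := Complex.exp (Complex.I * (α : ℂ) * ω)
  set w := g ^ j
  rw [hg]
  have h2 : Complex.I ^ 2 = -1 := Complex.I_sq
  have h3 : Complex.I ^ 3 = -Complex.I := by rw [pow_succ, h2]; ring
  have h4 : Complex.I ^ 4 = 1 := by
    rw [show Complex.I ^ 4 = (Complex.I ^ 2) ^ 2 by ring, h2]; norm_num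
  have h5 : Complex.I ^ 5 = Complex.I := by rw [pow_succ, h4, one_mul]
  have h6 : Complex.I ^ 6 = -1 := by
    rw [show Complex.I ^ 6 = (Complex.I ^ 2) ^ 3 by ring, h2]; norm_num
  field_simp
  ring_nf
  simp only [h2, h3, h4, h5, h6]
  ring
end

section
/- Fix ν > 0. For all j, ℓ ∈ ℤ, all α, β ∈ ℝ, and all ω ∈ ℂ \ {iν, -iν}: R_{j,α}(ω) · R_{ℓ,β}(ω) = R_{j+ℓ, α+β}(ω) − R_{j, α+β}(ω) − R_{ℓ, α+β}(ω). -/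
/-- Multiplication identity for the oscillatory rational basis:
`R_{j,α} · R_{ℓ,β} = R_{j+ℓ,α+β} − R_{j,α+β} − R_{ℓ,α+β}`. -/
theorem oscR_mul (ν : ℝ) (hν : 0 < ν) :
    ∀ (j ℓ : ℤ) (α β : ℝ) (ω : ℂ), ω ≠ Complex.I * (ν : ℂ) → ω ≠ -(Complex.I * (ν : ℂ)) →
      oscR ν α j ω * oscR ν β ℓ ω =
        oscR ν (α + β) (j + ℓ) ω - oscR ν (α + β) j ω - oscR ν (α + β) ℓ ω := by
  intro j ℓ α β ω h1 h2
  set z : ℂ := (ω - Complex.I * (ν : ℂ)) / (ω + Complex.I * (ν : ℂ)) with hz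
  have hnum : ω - Complex.I * (ν : ℂ) ≠ 0 := sub_ne_zero.mpr h1
  have hden : ω + Complex.I * (ν : ℂ) ≠ 0 := by
    intro h; exact h2 (by linear_combination h)
  have hzne : z ≠ 0 := div_ne_zero hnum hden
  have hexp : Complex.exp (Complex.I * (α : ℂ) * ω) * Complex.exp (Complex.I * (β : ℂ) * ω)
      = Complex.exp (Complex.I * ((α : ℝ) + (β : ℝ) : ℂ) * ω) := by
    rw [← Complex.exp_add]; ring_nf
  have hzz : z ^ (j + ℓ) = z ^ j * z ^ ℓ := zpow_add₀ hzne j ℓ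
  simp only [oscR, ← hz, Complex.ofReal_add]
  rw [← Complex.ofReal_add] at hexp
  rw [show Complex.exp (Complex.I * (α : ℂ) * ω) * (z ^ j - 1) *
      (Complex.exp (Complex.I * (β : ℂ) * ω) * (z ^ ℓ - 1))
      = (Complex.exp (Complex.I * (α : ℂ) * ω) * Complex.exp (Complex.I * (β : ℂ) * ω))
        * ((z ^ j - 1) * (z ^ ℓ - 1)) by ring, hexp, Complex.ofReal_add]
  rw [hzz]; ring
end

section
/- Fix ν > 0, an integer j ≥ 1, and a real α ≥ 0, and set R_{j,α}(t) = e^{i α t} (((t − iν)/(t + iν))^j − 1) for t ∈ ℝ. Then for every ω ∈ ℂ with Im ω > 0, the function t ↦ R_{j,α}(t)/(t − ω) is Lebesgue integrable on ℝ and (1/(2πi)) · ∫_ℝ R_{j,α}(t)/(t − ω) dt = R_{j,α}(ω); and for every ω ∈ ℂ with Im ω < 0, (1/(2πi)) · ∫_ℝ R_{j,α}(t)/(t − ω) dt = 0. -/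
open MeasureTheory

open Complex Filter

/-- Compatibility: the complex absolute value as a bundled absolute value. -/
noncomputable def Complex.abs : AbsoluteValue ℂ ℝ := NormedField.toAbsoluteValue ℂ

lemma Complex.norm_eq_abs (z : ℂ) : ‖z‖ = Complex.abs z := rfl

lemma Complex.abs_apply (z : ℂ) : Complex.abs z = Real.sqrt (Complex.normSq z) := rfl

lemma Complex.abs_ofReal (t : ℝ) : Complex.abs (t : ℂ) = |t| := by
  rw [← Complex.norm_eq_abs, Complex.norm_real, Real.norm_eq_abs]

lemma Complex.abs_I : Complex.abs Complex.I = 1 := by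
  rw [← Complex.norm_eq_abs, Complex.norm_I]

lemma Complex.abs_exp (z : ℂ) : Complex.abs (Complex.exp z) = Real.exp z.re := by
  rw [← Complex.norm_eq_abs, Complex.norm_exp]

lemma Complex.continuous_abs : Continuous Complex.abs := continuous_norm

lemma aux_integrable (h : ℝ → ℂ) (hc : Continuous h) (C M : ℝ) (hM : 1 ≤ M)
    (hb : ∀ t : ℝ, M ≤ |t| → ‖h t‖ ≤ C / t ^ 2) : Integrable h := by
  obtain ⟨K, hK⟩ : ∃ K, ∀ t ∈ Set.Icc (-M) M, ‖h t‖ ≤ K :=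
    (isCompact_Icc.exists_bound_of_continuousOn hc.continuousOn)
  have hM2 : (0:ℝ) < M ^ 2 := by positivity
  have hC : 0 ≤ C := by
    by_contra hneg
    have h1 := hb M (by rw [_root_.abs_of_nonneg (by linarith)])
    have h2 : C / M ^ 2 < 0 := div_neg_of_neg_of_pos (by linarith) hM2
    linarith [norm_nonneg (h M)]
  set D : ℝ := max (2 * C) (K * (1 + M ^ 2)) with hD
  have hK0 : 0 ≤ K := le_trans (norm_nonneg _) (hK 0 (by constructor <;> linarith))
  refine (integrable_inv_one_add_sq.const_mul D).mono' hc.aestronglyMeasurable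
    (Filter.Eventually.of_forall fun t => ?_)
  have h1 : (0:ℝ) < 1 + t ^ 2 := by positivity
  rcases le_or_gt M |t| with ht | ht
  · have ht2 : (1:ℝ) ≤ t ^ 2 := by
      have h3 : (1:ℝ) ≤ |t| := le_trans hM ht
      nlinarith [abs_nonneg t, _root_.sq_abs t]
    calc ‖h t‖ ≤ C / t ^ 2 := hb t ht
    _ ≤ 2 * C / (1 + t ^ 2) := by
        rw [div_le_div_iff₀ (by nlinarith) h1]; nlinarith
    _ ≤ D * (1 + t ^ 2)⁻¹ := by
        rw [div_eq_mul_inv]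
        exact mul_le_mul_of_nonneg_right (le_max_left _ _) (inv_nonneg.2 h1.le)
  · have hmem : t ∈ Set.Icc (-M) M := by
      constructor <;> [linarith [neg_abs_le t]; linarith [le_abs_self t]]
    calc ‖h t‖ ≤ K := hK t hmem
    _ ≤ K * (1 + M ^ 2) / (1 + t ^ 2) := by
        rw [le_div_iff₀ h1]
        have ht2 : t ^ 2 ≤ M ^ 2 := by nlinarith [_root_.sq_abs t, abs_nonneg t]
        nlinarith [mul_le_mul_of_nonneg_left ht2 hK0]
    _ ≤ D * (1 + t ^ 2)⁻¹ := by
        rw [div_eq_mul_inv]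
        exact mul_le_mul_of_nonneg_right (le_max_right _ _) (inv_nonneg.2 h1.le)


-- ratio tends to 1 at both ends
lemma aux_ratio (a b : ℂ) (hb : b.im ≠ 0) (l : Filter ℝ)
    (hl : Tendsto (fun t : ℝ => |t|) l atTop) :
    Tendsto (fun t : ℝ => ((t:ℂ) - a) / ((t:ℂ) - b)) l (nhds 1) := by
  have hne : ∀ t : ℝ, (t:ℂ) - b ≠ 0 := by
    intro t h
    apply hb
    have := congrArg Complex.im h
    simpa using this.symm
  have h0 : Tendsto (fun t : ℝ => (b - a) / ((t:ℂ) - b)) l (nhds 0) := by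
    rw [tendsto_zero_iff_norm_tendsto_zero]
    have hnorm : ∀ t : ℝ, ‖(b - a) / ((t:ℂ) - b)‖ = ‖b - a‖ / Complex.abs ((t:ℂ) - b) := by
      intro t; simp [Complex.norm_eq_abs, map_div₀]
    simp_rw [hnorm]
    apply Tendsto.div_atTop tendsto_const_nhds
    -- abs (t - b) → atTop
    have hlow : ∀ t : ℝ, |t| - Complex.abs b ≤ Complex.abs ((t:ℂ) - b) := by
      intro t
      have h1 := norm_sub_norm_le ((t:ℂ)) b
      simpa [Complex.norm_eq_abs] using h1
    apply tendsto_atTop_mono hlow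
    exact tendsto_atTop_add_const_right _ _ hl
  have : ∀ t : ℝ, ((t:ℂ) - a) / ((t:ℂ) - b) = 1 + (b - a) / ((t:ℂ) - b) := by
    intro t
    field_simp [hne t]
    ring
  simp_rw [this]
  simpa using tendsto_const_nhds.add h0

lemma aux_ne (c : ℂ) (hc : c.im ≠ 0) (t : ℝ) : (t:ℂ) - c ≠ 0 := by
  intro h
  apply hc
  have := congrArg Complex.im h
  simpa using this.symm

-- real-part limit
lemma aux_relog (a b : ℂ) (ha : a.im ≠ 0) (hb : b.im ≠ 0) (l : Filter ℝ)
    (hl : Tendsto (fun t : ℝ => |t|) l atTop) :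
    Tendsto (fun t : ℝ => Real.log (Complex.abs ((t:ℂ) - a))
      - Real.log (Complex.abs ((t:ℂ) - b))) l (nhds 0) := by
  have heq : ∀ t : ℝ, Real.log (Complex.abs ((t:ℂ) - a)) - Real.log (Complex.abs ((t:ℂ) - b))
      = Real.log (Complex.abs (((t:ℂ) - a) / ((t:ℂ) - b))) := by
    intro t
    rw [map_div₀, Real.log_div (Complex.abs.ne_zero (aux_ne a ha t))
      (Complex.abs.ne_zero (aux_ne b hb t))]
  simp_rw [heq]
  have h1 : Tendsto (fun t : ℝ => ((t:ℂ) - a) / ((t:ℂ) - b)) l (nhds 1) :=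
    aux_ratio a b hb l hl
  have h2 : Tendsto (fun z : ℂ => Real.log (Complex.abs z)) (nhds 1) (nhds 0) := by
    have : ContinuousAt (fun z : ℂ => Real.log (Complex.abs z)) 1 :=
      (Real.continuousAt_log (by simp)).comp Complex.continuous_abs.continuousAt
    simpa using this.tendsto
  exact h2.comp h1

-- arg limits at +infty
lemma aux_arg_top (c : ℂ) (hc : c.im ≠ 0) :
    Tendsto (fun t : ℝ => Complex.arg ((t:ℂ) - c)) atTop (nhds 0) := by
  have key : ∀ᶠ t : ℝ in atTop, Complex.arg ((t:ℂ) - c)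
      = Complex.arg (((t:ℂ) - c) / t) := by
    filter_upwards [eventually_gt_atTop (0:ℝ)] with t ht
    have h0 : ((t:ℝ):ℂ) ≠ 0 := by exact_mod_cast ht.ne'
    have hx : ((t:ℝ):ℂ) * (((t:ℂ) - c) / t) = (t:ℂ) - c := by field_simp
    rw [← hx, Complex.arg_real_mul _ ht, hx]
  rw [Filter.tendsto_congr' key]
  have h1 : Tendsto (fun t : ℝ => ((t:ℂ) - c) / t) atTop (nhds 1) := by
    have h0 : Tendsto (fun t : ℝ => c / (t:ℂ)) atTop (nhds 0) := by
      rw [tendsto_zero_iff_norm_tendsto_zero]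
      have : ∀ t : ℝ, ‖c / (t:ℂ)‖ = ‖c‖ / |t| := by
        intro t; rw [norm_div, Complex.norm_real, Real.norm_eq_abs]
      simp_rw [this]
      exact Tendsto.div_atTop tendsto_const_nhds tendsto_abs_atTop_atTop
    have hcong : ∀ᶠ t : ℝ in atTop, ((t:ℂ) - c) / t = 1 - c / t := by
      filter_upwards [eventually_gt_atTop (0:ℝ)] with t ht
      have h2 : ((t:ℝ):ℂ) ≠ 0 := by exact_mod_cast ht.ne'
      field_simp
    rw [Filter.tendsto_congr' hcong]
    simpa using tendsto_const_nhds.sub h0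
  have h2 := (Complex.continuousAt_arg Complex.one_mem_slitPlane).tendsto
  simpa [Complex.arg_one, Function.comp_def] using h2.comp h1

lemma aux_u_eq (c : ℂ) (t : ℝ) (ht : t < 0) :
    Complex.arg ((t:ℂ) - c) = Complex.arg (-1 + c / t) := by
  have h0 : ((t:ℝ):ℂ) ≠ 0 := by
    simpa using (show (t:ℝ) ≠ 0 from ht.ne)
  have hx : ((-t:ℝ):ℂ) * (-1 + c / t) = (t:ℂ) - c := by
    push_cast
    field_simp
    ring
  rw [← hx, Complex.arg_real_mul _ (by linarith : (0:ℝ) < -t)]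

lemma aux_u_tendsto (c : ℂ) : Tendsto (fun t : ℝ => -1 + c / (t:ℂ)) atBot (nhds (-1)) := by
  have h0 : Tendsto (fun t : ℝ => c / (t:ℂ)) atBot (nhds 0) := by
    rw [tendsto_zero_iff_norm_tendsto_zero]
    have : ∀ t : ℝ, ‖c / (t:ℂ)‖ = ‖c‖ / |t| := by
      intro t; rw [norm_div, Complex.norm_real, Real.norm_eq_abs]
    simp_rw [this]
    exact Tendsto.div_atTop tendsto_const_nhds tendsto_abs_atBot_atTop
  simpa using tendsto_const_nhds.add h0

lemma aux_im_div (c : ℂ) (t : ℝ) : (c / (t:ℂ)).im = c.im / t := by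
  rcases eq_or_ne t 0 with rfl | ht
  · simp
  · rw [div_eq_mul_inv, ← Complex.ofReal_inv, Complex.mul_im]
    simp only [Complex.ofReal_im, Complex.ofReal_re, mul_zero, zero_add, zero_mul]
    rw [div_eq_mul_inv]

lemma aux_arg_bot (c : ℂ) (hc : 0 < c.im) :
    Tendsto (fun t : ℝ => Complex.arg ((t:ℂ) - c)) atBot (nhds (-Real.pi)) := by
  have key : ∀ᶠ t : ℝ in atBot, Complex.arg ((t:ℂ) - c) = Complex.arg (-1 + c / t) :=
    by filter_upwards [eventually_lt_atBot (0:ℝ)] with t ht using aux_u_eq c t ht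
  rw [Filter.tendsto_congr' key]
  have hmem : ∀ᶠ t : ℝ in atBot, (-1 + c / (t:ℂ)) ∈ {z : ℂ | z.im < 0} := by
    filter_upwards [eventually_lt_atBot (0:ℝ)] with t ht
    show (-1 + c / (t:ℂ)).im < 0
    rw [Complex.add_im, aux_im_div]
    simpa using div_neg_of_pos_of_neg hc ht
  have hu : Tendsto (fun t : ℝ => -1 + c / (t:ℂ)) atBot (nhdsWithin (-1) {z : ℂ | z.im < 0}) :=
    tendsto_nhdsWithin_iff.2 ⟨aux_u_tendsto c, hmem⟩
  exact (Complex.tendsto_arg_nhdsWithin_im_neg_of_re_neg_of_im_zero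
    (by norm_num) (by norm_num)).comp hu

lemma aux_arg_bot' (c : ℂ) (hc : c.im < 0) :
    Tendsto (fun t : ℝ => Complex.arg ((t:ℂ) - c)) atBot (nhds Real.pi) := by
  have key : ∀ᶠ t : ℝ in atBot, Complex.arg ((t:ℂ) - c) = Complex.arg (-1 + c / t) :=
    by filter_upwards [eventually_lt_atBot (0:ℝ)] with t ht using aux_u_eq c t ht
  rw [Filter.tendsto_congr' key]
  have hmem : ∀ᶠ t : ℝ in atBot, (-1 + c / (t:ℂ)) ∈ {z : ℂ | 0 ≤ z.im} := by
    filter_upwards [eventually_lt_atBot (0:ℝ)] with t ht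
    show 0 ≤ (-1 + c / (t:ℂ)).im
    rw [Complex.add_im, aux_im_div]
    have := div_pos_of_neg_of_neg hc ht
    simpa using this.le
  have hu : Tendsto (fun t : ℝ => -1 + c / (t:ℂ)) atBot (nhdsWithin (-1) {z : ℂ | 0 ≤ z.im}) :=
    tendsto_nhdsWithin_iff.2 ⟨aux_u_tendsto c, hmem⟩
  exact (Complex.tendsto_arg_nhdsWithin_im_nonneg_of_re_neg_of_im_zero
    (by norm_num) (by norm_num)).comp hu

lemma aux_G_decomp (a b : ℂ) (ha : a.im ≠ 0) (hb : b.im ≠ 0) (t : ℝ) :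
    Complex.log ((t:ℂ) - a) - Complex.log ((t:ℂ) - b)
      = ((Real.log (Complex.abs ((t:ℂ) - a)) - Real.log (Complex.abs ((t:ℂ) - b)) : ℝ) : ℂ)
        + ((Complex.arg ((t:ℂ) - a) - Complex.arg ((t:ℂ) - b) : ℝ) : ℂ) * Complex.I := by
  rw [Complex.log, Complex.log]
  simp only [Complex.norm_eq_abs]
  push_cast
  ring

lemma aux_G_top (a b : ℂ) (ha : 0 < a.im) (hb : b.im < 0) :
    Tendsto (fun t : ℝ => Complex.log ((t:ℂ) - a) - Complex.log ((t:ℂ) - b)) atTop (nhds 0) := by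
  simp_rw [aux_G_decomp a b ha.ne' hb.ne]
  have h1 := aux_relog a b ha.ne' hb.ne atTop tendsto_abs_atTop_atTop
  have h2 := (aux_arg_top a ha.ne').sub (aux_arg_top b hb.ne)
  have := ((Complex.continuous_ofReal.tendsto _).comp h1).add
    (((Complex.continuous_ofReal.tendsto _).comp h2).mul_const Complex.I)
  simpa using this

lemma aux_G_bot (a b : ℂ) (ha : 0 < a.im) (hb : b.im < 0) :
    Tendsto (fun t : ℝ => Complex.log ((t:ℂ) - a) - Complex.log ((t:ℂ) - b)) atBot
      (nhds (-(2 * Real.pi * Complex.I))) := by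
  simp_rw [aux_G_decomp a b ha.ne' hb.ne]
  have h1 := aux_relog a b ha.ne' hb.ne atBot tendsto_abs_atBot_atTop
  have h2 := (aux_arg_bot a ha).sub (aux_arg_bot' b hb)
  have := ((Complex.continuous_ofReal.tendsto _).comp h1).add
    (((Complex.continuous_ofReal.tendsto _).comp h2).mul_const Complex.I)
  have e : ((0:ℝ):ℂ) + ((-Real.pi - Real.pi : ℝ):ℂ) * Complex.I
      = -(2 * Real.pi * Complex.I) := by push_cast; ring
  rw [← e]
  simpa using this

lemma aux_hasDeriv_log (c : ℂ) (hc : c.im ≠ 0) (t : ℝ) :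
    HasDerivAt (fun s : ℝ => Complex.log ((s:ℂ) - c)) (((t:ℂ) - c)⁻¹) t := by
  have hmem : ((t:ℂ) - c) ∈ Complex.slitPlane := by
    right
    simpa using (show -c.im ≠ 0 by simpa using hc)
  have h1 : HasDerivAt (fun z : ℂ => Complex.log (z - c)) (((t:ℂ) - c)⁻¹) (t:ℂ) := by
    have := (Complex.hasDerivAt_log hmem).comp (t:ℂ) ((hasDerivAt_id _).sub_const c)
    simpa [Function.comp_def] using this
  exact h1.comp_ofReal

lemma aux_base (a b : ℂ) (ha : 0 < a.im) (hb : b.im < 0) :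
    Integrable (fun t : ℝ => ((t:ℂ) - a)⁻¹ * ((t:ℂ) - b)⁻¹) ∧
    ∫ t : ℝ, ((t:ℂ) - a)⁻¹ * ((t:ℂ) - b)⁻¹ = 2 * Real.pi * Complex.I / (a - b) := by
  have hna : ∀ t : ℝ, (t:ℂ) - a ≠ 0 := aux_ne a ha.ne'
  have hnb : ∀ t : ℝ, (t:ℂ) - b ≠ 0 := aux_ne b hb.ne
  have hcont : Continuous (fun t : ℝ => ((t:ℂ) - a)⁻¹ * ((t:ℂ) - b)⁻¹) := by
    apply Continuous.mul
    · exact ((Complex.continuous_ofReal.sub continuous_const).inv₀ hna)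
    · exact ((Complex.continuous_ofReal.sub continuous_const).inv₀ hnb)
  set M : ℝ := max 1 (2 * Complex.abs a + 2 * Complex.abs b) with hM
  have hint : Integrable (fun t : ℝ => ((t:ℂ) - a)⁻¹ * ((t:ℂ) - b)⁻¹) := by
    apply aux_integrable _ hcont 4 M (le_max_left _ _)
    intro t ht
    have h1 : |t| / 2 ≤ Complex.abs ((t:ℂ) - a) := by
      have := norm_sub_norm_le ((t:ℂ)) a
      have h2 : Complex.abs ((t:ℝ):ℂ) = |t| := Complex.abs_ofReal t
      have h3 : 2 * Complex.abs a ≤ |t| := by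
        refine le_trans ?_ ht
        rw [hM]
        refine le_trans ?_ (le_max_right _ _)
        linarith [AbsoluteValue.nonneg Complex.abs b]
      simp only [Complex.norm_eq_abs] at this
      rw [h2] at this
      linarith
    have h1' : |t| / 2 ≤ Complex.abs ((t:ℂ) - b) := by
      have := norm_sub_norm_le ((t:ℂ)) b
      have h2 : Complex.abs ((t:ℝ):ℂ) = |t| := Complex.abs_ofReal t
      have h3 : 2 * Complex.abs b ≤ |t| := by
        refine le_trans ?_ ht
        rw [hM]
        refine le_trans ?_ (le_max_right _ _)
        linarith [AbsoluteValue.nonneg Complex.abs a]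
      simp only [Complex.norm_eq_abs] at this
      rw [h2] at this
      linarith
    have ht0 : (0:ℝ) < |t| := lt_of_lt_of_le (by linarith [le_max_left (1:ℝ) (2 * Complex.abs a + 2 * Complex.abs b)]) ht
    have hnorm : ‖((t:ℂ) - a)⁻¹ * ((t:ℂ) - b)⁻¹‖
        = (Complex.abs ((t:ℂ) - a))⁻¹ * (Complex.abs ((t:ℂ) - b))⁻¹ := by
      simp [Complex.norm_eq_abs, map_mul, map_inv₀]
    rw [hnorm]
    have e1 : (Complex.abs ((t:ℂ) - a))⁻¹ ≤ (|t| / 2)⁻¹ := by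
      apply inv_anti₀ (by linarith) h1
    have e1' : (Complex.abs ((t:ℂ) - b))⁻¹ ≤ (|t| / 2)⁻¹ := by
      apply inv_anti₀ (by linarith) h1'
    calc (Complex.abs ((t:ℂ) - a))⁻¹ * (Complex.abs ((t:ℂ) - b))⁻¹
        ≤ (|t| / 2)⁻¹ * (|t| / 2)⁻¹ := by
          apply mul_le_mul e1 e1' (by positivity) (by positivity)
    _ = 4 / t ^ 2 := by
        rw [show t ^ 2 = |t| ^ 2 from (_root_.sq_abs t).symm]
        field_simp
        ring
  refine ⟨hint, ?_⟩
  -- FTC on [-A, A]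
  have hab : a - b ≠ 0 := by
    intro h
    rw [sub_eq_zero] at h
    rw [h] at ha
    linarith
  have hFTC : ∀ A : ℝ, ∫ t in (-A)..A, ((t:ℂ) - a)⁻¹ * ((t:ℂ) - b)⁻¹
      = (a - b)⁻¹ * ((Complex.log ((A:ℂ) - a) - Complex.log ((A:ℂ) - b))
        - (Complex.log ((-A:ℂ) - a) - Complex.log ((-A:ℂ) - b))) := by
    intro A
    have hderiv : ∀ t : ℝ, t ∈ Set.uIcc (-A) A →
        HasDerivAt (fun s : ℝ => (a - b)⁻¹ *
          (Complex.log ((s:ℂ) - a) - Complex.log ((s:ℂ) - b)))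
          (((t:ℂ) - a)⁻¹ * ((t:ℂ) - b)⁻¹) t := by
      intro t _
      have h1 := ((aux_hasDeriv_log a ha.ne' t).sub (aux_hasDeriv_log b hb.ne t)).const_mul
        ((a - b)⁻¹)
      refine h1.congr_deriv ?_
      have e2 : ((t:ℂ) - a)⁻¹ - ((t:ℂ) - b)⁻¹ = (a - b) * (((t:ℂ) - a)⁻¹ * ((t:ℂ) - b)⁻¹) := by
        rw [inv_sub_inv (hna t) (hnb t), show ((t:ℂ) - b) - ((t:ℂ) - a) = a - b by ring,
          div_eq_mul_inv, mul_inv]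
      rw [e2, ← mul_assoc, inv_mul_cancel₀ hab, one_mul]
    have := intervalIntegral.integral_eq_sub_of_hasDerivAt hderiv
      hint.intervalIntegrable
    rw [this]
    push_cast
    ring
  have h1 : Tendsto (fun A : ℝ => ∫ t in (-A)..A, ((t:ℂ) - a)⁻¹ * ((t:ℂ) - b)⁻¹) atTop
      (nhds (∫ t : ℝ, ((t:ℂ) - a)⁻¹ * ((t:ℂ) - b)⁻¹)) :=
    intervalIntegral_tendsto_integral hint Filter.tendsto_neg_atTop_atBot Filter.tendsto_id
  have h2 : Tendsto (fun A : ℝ => ∫ t in (-A)..A, ((t:ℂ) - a)⁻¹ * ((t:ℂ) - b)⁻¹) atTop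
      (nhds (2 * Real.pi * Complex.I / (a - b))) := by
    simp_rw [hFTC]
    have hGtop := aux_G_top a b ha hb
    have hGbot : Tendsto (fun A : ℝ => Complex.log ((-A:ℂ) - a) - Complex.log ((-A:ℂ) - b))
        atTop (nhds (-(2 * Real.pi * Complex.I))) := by
      have := (aux_G_bot a b ha hb).comp Filter.tendsto_neg_atTop_atBot
      convert this using 2 with A
      simp [Function.comp]
    have hfin := (hGtop.sub hGbot).const_mul ((a - b)⁻¹)
    have e : (a - b)⁻¹ * ((0:ℂ) - -(2 * Real.pi * Complex.I))
        = 2 * Real.pi * Complex.I / (a - b) := by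
      rw [div_eq_mul_inv]
      ring
    rw [← e]
    exact hfin
  exact tendsto_nhds_unique h1 h2


lemma aux_vanish (g : ℂ → ℂ) (d : ℝ) (hd : 0 < d)
    (hdiff : DifferentiableOn ℂ g {z : ℂ | -d < z.im})
    (hint : Integrable (fun t : ℝ => g t))
    (C M : ℝ) (hC : 0 ≤ C)
    (hb : ∀ z : ℂ, 0 ≤ z.im → M ≤ Complex.abs z → ‖g z‖ ≤ C / Complex.abs z ^ 2) :
    ∫ t : ℝ, g t = 0 := by
  have key : ∀ A : ℝ, max M 1 ≤ A → ‖∫ t in (-A)..A, g t‖ ≤ 4 * C / A := by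
    intro A hA
    have hA1 : (1:ℝ) ≤ A := le_trans (le_max_right _ _) hA
    have hA0 : (0:ℝ) < A := lt_of_lt_of_le one_pos hA1
    have hAM : M ≤ A := le_trans (le_max_left _ _) hA
    have hA2 : (0:ℝ) < A ^ 2 := by positivity
    -- generic bound on any point with im ≥ 0 and |z| ≥ A
    have hbA : ∀ z : ℂ, 0 ≤ z.im → A ≤ Complex.abs z → ‖g z‖ ≤ C / A ^ 2 := by
      intro z h1 h2
      refine le_trans (hb z h1 (le_trans hAM h2)) ?_
      apply div_le_div_of_nonneg_left hC hA2
      · exact pow_le_pow_left₀ hA0.le h2 2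
    -- rectangle: z = -A (real), w = A + A*I
    have hrect := integral_boundary_rect_eq_zero_of_differentiableOn g
      (((-A : ℝ) : ℂ)) ((A:ℂ) + (A:ℂ) * I) ?_
    · simp only [Complex.ofReal_re, Complex.ofReal_im, Complex.add_re, Complex.add_im,
        Complex.mul_re, Complex.mul_im, Complex.I_re, Complex.I_im] at hrect
      norm_num at hrect
      have e0 : (fun x : ℝ => g ((x:ℂ) + (0:ℝ) * I)) = fun x : ℝ => g x := by
        funext x; norm_num
      rw [intervalIntegral.integral_congr (g := fun x : ℝ => g x)
          (fun x _ => by norm_num)] at hrect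
      -- bound the three non-real-axis integrals
      have htop : ‖∫ x : ℝ in (-A)..A, g ((x:ℂ) + (A:ℝ) * I)‖ ≤ C / A ^ 2 * |A - (-A)| := by
        apply intervalIntegral.norm_integral_le_of_norm_le_const
        intro x hx
        apply hbA
        · simp [hA0.le]
        · refine le_trans ?_ (Complex.abs_im_le_norm _)
          simp [abs_of_pos hA0]
      have hright : ‖∫ y : ℝ in (0:ℝ)..A, g ((A:ℂ) + (y:ℝ) * I)‖ ≤ C / A ^ 2 * |A - 0| := by
        apply intervalIntegral.norm_integral_le_of_norm_le_const
        intro y hy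
        rw [Set.uIoc_of_le hA0.le] at hy
        apply hbA
        · simp [hy.1.le]
        · refine le_trans ?_ (Complex.abs_re_le_norm _)
          simp [abs_of_pos hA0]
      have hleft : ‖∫ y : ℝ in (0:ℝ)..A, g (((-A:ℝ):ℂ) + (y:ℝ) * I)‖ ≤ C / A ^ 2 * |A - 0| := by
        apply intervalIntegral.norm_integral_le_of_norm_le_const
        intro y hy
        rw [Set.uIoc_of_le hA0.le] at hy
        apply hbA
        · simp [hy.1.le]
        · refine le_trans ?_ (Complex.abs_re_le_norm _)
          simp [abs_of_pos hA0]
      have heq : (∫ t in (-A)..A, g t) =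
          (∫ x : ℝ in (-A)..A, g ((x:ℂ) + (A:ℝ) * I))
          - I * (∫ y : ℝ in (0:ℝ)..A, g ((A:ℂ) + (y:ℝ) * I))
          + I * (∫ y : ℝ in (0:ℝ)..A, g ((-(A:ℂ)) + (y:ℝ) * I)) := by
        linear_combination hrect
      rw [heq]
      have hnorm : ∀ c : ℂ, ‖I * c‖ = ‖c‖ := by
        intro c; rw [norm_mul, Complex.norm_I, one_mul]
      have hlA : ((-A:ℝ):ℂ) = -(A:ℂ) := by push_cast; ring
      rw [hlA] at hleft
      calc ‖_ - _ + _‖ ≤ ‖_ - _‖ + ‖I * _‖ := norm_add_le _ _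
      _ ≤ ‖_‖ + ‖I * _‖ + ‖I * _‖ := by gcongr; exact norm_sub_le _ _
      _ ≤ C / A ^ 2 * |A - (-A)| + C / A ^ 2 * |A - 0| + C / A ^ 2 * |A - 0| := by
          rw [hnorm, hnorm]; gcongr <;> assumption
      _ = 4 * C / A := by
          rw [show |A - (-A)| = 2 * A by rw [abs_of_pos] <;> linarith,
            show |A - 0| = A by rw [abs_of_pos] <;> linarith]
          field_simp; ring
    · -- differentiability on the rectangle
      apply hdiff.mono
      intro z hz
      rw [Complex.mem_reProdIm] at hz
      obtain ⟨-, h2⟩ := hz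
      simp only [Complex.ofReal_re, Complex.ofReal_im, Complex.add_im, Complex.mul_im,
        Complex.I_re, Complex.I_im, Complex.add_re, Complex.mul_re] at h2
      norm_num at h2
      rw [Set.uIcc_of_le hA0.le] at h2
      show -d < z.im
      linarith [h2.1]
  have h1 : Filter.Tendsto (fun A : ℝ => ∫ t in (-A)..A, g t) Filter.atTop
      (nhds (∫ t : ℝ, g t)) :=
    intervalIntegral_tendsto_integral hint Filter.tendsto_neg_atTop_atBot Filter.tendsto_id
  have h2 : Filter.Tendsto (fun A : ℝ => ∫ t in (-A)..A, g t) Filter.atTop (nhds 0) := by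
    apply squeeze_zero_norm' (a := fun A => 4 * C / A)
    · filter_upwards [Filter.eventually_ge_atTop (max M 1)] with A hA using key A hA
    · simpa using tendsto_const_nhds.div_atTop Filter.tendsto_id
  exact tendsto_nhds_unique h1 h2

lemma aux_pow_sub_one (w : ℂ) (hw : ‖w‖ ≤ 1) (n : ℕ) : ‖w ^ n - 1‖ ≤ n * ‖w - 1‖ := by
  induction n with
  | zero => simp
  | succ n ih =>
    have e : w ^ (n + 1) - 1 = w ^ n * (w - 1) + (w ^ n - 1) := by ring
    rw [e]
    calc ‖w ^ n * (w - 1) + (w ^ n - 1)‖ ≤ ‖w ^ n * (w - 1)‖ + ‖w ^ n - 1‖ := norm_add_le _ _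
    _ ≤ 1 * ‖w - 1‖ + n * ‖w - 1‖ := by
        refine add_le_add ?_ ih
        rw [norm_mul]
        have h1 : ‖w ^ n‖ ≤ 1 := by
          rw [norm_pow]; exact pow_le_one₀ (norm_nonneg w) hw
        exact mul_le_mul_of_nonneg_right h1 (norm_nonneg (w - 1))
    _ = (n + 1 : ℕ) * ‖w - 1‖ := by push_cast; ring

lemma aux_zpow_sub_one (w : ℂ) (hw : ‖w‖ ≤ 1) (j : ℤ) (hj : 1 ≤ j) :
    ‖w ^ j - 1‖ ≤ (j : ℝ) * ‖w - 1‖ := by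
  have hj0 : (0:ℤ) ≤ j := by linarith
  rw [show j = (j.toNat : ℤ) from (Int.toNat_of_nonneg hj0).symm, zpow_natCast]
  exact_mod_cast aux_pow_sub_one w hw j.toNat

lemma aux_den_ne (ν : ℝ) (hν : 0 < ν) (z : ℂ) (him : 0 ≤ z.im) : z + Complex.I * ν ≠ 0 := by
  intro h
  have := congrArg Complex.im h
  simp only [Complex.add_im, Complex.mul_im, Complex.I_re, Complex.I_im, Complex.ofReal_re,
    Complex.ofReal_im, Complex.zero_im] at this
  norm_num at this
  linarith

lemma aux_abs_le_den (ν : ℝ) (hν : 0 < ν) (z : ℂ) (him : 0 ≤ z.im) :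
    Complex.abs z ≤ Complex.abs (z + Complex.I * ν) := by
  rw [Complex.abs_apply, Complex.abs_apply]
  apply Real.sqrt_le_sqrt
  rw [Complex.normSq_apply, Complex.normSq_apply]
  simp only [Complex.add_re, Complex.add_im, Complex.mul_re, Complex.mul_im, Complex.I_re,
    Complex.I_im, Complex.ofReal_re, Complex.ofReal_im]
  nlinarith

lemma aux_f_bound (ν α : ℝ) (hν : 0 < ν) (hα : 0 ≤ α) (j : ℤ) (hj : 1 ≤ j) (z : ℂ)
    (him : 0 ≤ z.im) (hz : z ≠ 0) : ‖oscR ν α j z‖ ≤ 2 * j * ν / Complex.abs z := by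
  have hden : z + Complex.I * ν ≠ 0 := aux_den_ne ν hν z him
  have habs0 : 0 < Complex.abs z := by
    simpa [Complex.abs.pos_iff] using hz
  have habsden : Complex.abs z ≤ Complex.abs (z + Complex.I * ν) := aux_abs_le_den ν hν z him
  have habsden0 : 0 < Complex.abs (z + Complex.I * ν) := lt_of_lt_of_le habs0 habsden
  set w : ℂ := (z - Complex.I * ν) / (z + Complex.I * ν) with hw
  have hw1 : ‖w‖ ≤ 1 := by
    rw [hw, Complex.norm_eq_abs, map_div₀, div_le_one habsden0]
    rw [Complex.abs_apply, Complex.abs_apply]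
    apply Real.sqrt_le_sqrt
    rw [Complex.normSq_apply, Complex.normSq_apply]
    simp only [Complex.sub_re, Complex.sub_im, Complex.add_re, Complex.add_im, Complex.mul_re,
      Complex.mul_im, Complex.I_re, Complex.I_im, Complex.ofReal_re, Complex.ofReal_im]
    nlinarith
  have hwm1 : w - 1 = (-2 * Complex.I * (ν:ℂ)) / (z + Complex.I * ν) := by
    rw [hw, div_sub_one hden]
    rw [show z - Complex.I * ν - (z + Complex.I * ν) = -2 * Complex.I * (ν:ℂ) by ring]
  have hnorm_wm1 : ‖w - 1‖ = 2 * ν / Complex.abs (z + Complex.I * ν) := by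
    rw [hwm1, Complex.norm_eq_abs, map_div₀]
    congr 1
    rw [show (-2 * Complex.I * (ν:ℂ)) = ((-2 * ν : ℝ) : ℂ) * Complex.I by push_cast; ring]
    rw [map_mul, Complex.abs_ofReal, Complex.abs_I, mul_one, _root_.abs_of_nonpos (by linarith)]
    ring
  have hexp : ‖Complex.exp (Complex.I * (α:ℂ) * z)‖ ≤ 1 := by
    rw [Complex.norm_eq_abs, Complex.abs_exp, Real.exp_le_one_iff]
    simp only [Complex.mul_re, Complex.I_re, Complex.I_im, Complex.ofReal_re, Complex.ofReal_im,
      Complex.mul_im]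
    nlinarith
  have hj0 : (0:ℝ) ≤ (j:ℝ) := by exact_mod_cast le_trans zero_le_one hj
  have hpow : ‖w ^ j - 1‖ ≤ (j:ℝ) * (2 * ν / Complex.abs (z + Complex.I * ν)) := by
    rw [← hnorm_wm1]
    exact aux_zpow_sub_one w hw1 j hj
  rw [oscR, norm_mul]
  calc ‖Complex.exp (Complex.I * (α:ℂ) * z)‖ * ‖w ^ j - 1‖
      ≤ 1 * ((j:ℝ) * (2 * ν / Complex.abs (z + Complex.I * ν))) := by
        apply mul_le_mul hexp hpow (norm_nonneg _) zero_le_one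
  _ = 2 * (j:ℝ) * ν / Complex.abs (z + Complex.I * ν) := by ring
  _ ≤ 2 * (j:ℝ) * ν / Complex.abs z := by
      apply div_le_div_of_nonneg_left (by positivity) habs0 habsden

lemma aux_oscR_diff (ν α : ℝ) (hν : 0 < ν) (j : ℤ) (hj : 1 ≤ j) :
    DifferentiableOn ℂ (oscR ν α j) {z : ℂ | -ν < z.im} := by
  intro z hz
  have hzim : -ν < z.im := hz
  have hden : z + Complex.I * ν ≠ 0 := by
    intro h
    have := congrArg Complex.im h
    simp only [Complex.add_im, Complex.mul_im, Complex.I_re, Complex.I_im, Complex.ofReal_re,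
      Complex.ofReal_im, Complex.zero_im] at this
    norm_num at this
    linarith
  apply DifferentiableAt.differentiableWithinAt
  have h1 : DifferentiableAt ℂ (fun z : ℂ => Complex.exp (Complex.I * (α:ℂ) * z)) z :=
    Complex.differentiable_exp.differentiableAt.comp z (differentiableAt_id.const_mul _)
  have h2 : DifferentiableAt ℂ
      (fun z : ℂ => (z - Complex.I * ν) / (z + Complex.I * ν)) z :=
    (differentiableAt_id.sub_const _).div (differentiableAt_id.add_const _) hden
  have h3 : DifferentiableAt ℂ (fun w : ℂ => w ^ j)
      ((z - Complex.I * ν) / (z + Complex.I * ν)) :=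
    differentiableAt_zpow.mpr (Or.inr (by linarith))
  exact h1.mul ((h3.comp z h2).sub_const 1)



lemma aux_half (ω z : ℂ) (hM : max 1 (2 * Complex.abs ω) ≤ Complex.abs z) :
    Complex.abs z / 2 ≤ Complex.abs (z - ω) ∧ 0 < Complex.abs z ∧ z ≠ 0 ∧ z ≠ ω := by
  have h1 : (1:ℝ) ≤ Complex.abs z := le_trans (le_max_left _ _) hM
  have h2 : 2 * Complex.abs ω ≤ Complex.abs z := le_trans (le_max_right _ _) hM
  have h0 : (0:ℝ) < Complex.abs z := by linarith
  have hzn : z ≠ 0 := by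
    intro h; rw [h] at h0; simp at h0
  have hlow : Complex.abs z / 2 ≤ Complex.abs (z - ω) := by
    have := norm_sub_norm_le z ω
    simp only [Complex.norm_eq_abs] at this
    linarith
  refine ⟨hlow, h0, hzn, ?_⟩
  intro h
  rw [h] at h1 h2
  linarith

lemma aux_quot_bound (ν α : ℝ) (hν : 0 < ν) (hα : 0 ≤ α) (j : ℤ) (hj : 1 ≤ j) (ω z : ℂ)
    (him : 0 ≤ z.im) (hM : max 1 (2 * Complex.abs ω) ≤ Complex.abs z) :
    ‖oscR ν α j z / (z - ω)‖ ≤ 4 * j * ν / Complex.abs z ^ 2 := by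
  obtain ⟨hlow, h0, hzn, -⟩ := aux_half ω z hM
  have hnum := aux_f_bound ν α hν hα j hj z him hzn
  have hj0 : (0:ℝ) ≤ (j:ℝ) := by exact_mod_cast le_trans zero_le_one hj
  rw [norm_div]
  have hnn : (0:ℝ) ≤ 2 * j * ν / Complex.abs z := by
    apply div_nonneg (by nlinarith) h0.le
  calc ‖oscR ν α j z‖ / ‖z - ω‖ ≤ (2 * j * ν / Complex.abs z) / (Complex.abs z / 2) :=
    div_le_div₀ hnn hnum (by linarith) (by rwa [Complex.norm_eq_abs])
  _ = 4 * j * ν / Complex.abs z ^ 2 := by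
      rw [div_div_eq_mul_div, div_mul_eq_mul_div, div_div]
      congr 1
      · ring
      · ring


lemma aux_cont_quot (ν α : ℝ) (hν : 0 < ν) (j : ℤ) (hj : 1 ≤ j) (ω : ℂ) (hω : ω.im ≠ 0) :
    Continuous (fun t : ℝ => oscR ν α j (t:ℂ) / ((t:ℂ) - ω)) := by
  rw [continuous_iff_continuousAt]
  intro t
  have h1 : DifferentiableAt ℂ (oscR ν α j) (t:ℂ) := by
    have := aux_oscR_diff ν α hν j hj
    have hmem : ((t:ℂ)) ∈ {z : ℂ | -ν < z.im} := by simp [hν]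
    exact (this.differentiableAt ((isOpen_lt continuous_const Complex.continuous_im).mem_nhds hmem))
  have h2 : ContinuousAt (fun z : ℂ => oscR ν α j z / (z - ω)) (t:ℂ) :=
    h1.continuousAt.div ((continuous_id.sub continuous_const).continuousAt) (aux_ne ω hω t)
  exact h2.comp Complex.continuous_ofReal.continuousAt

lemma aux_int_quot (ν α : ℝ) (hν : 0 < ν) (hα : 0 ≤ α) (j : ℤ) (hj : 1 ≤ j) (ω : ℂ)
    (hω : ω.im ≠ 0) :
    Integrable (fun t : ℝ => oscR ν α j (t:ℂ) / ((t:ℂ) - ω)) := by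
  apply aux_integrable _ (aux_cont_quot ν α hν j hj ω hω) (4 * j * ν)
    (max 1 (2 * Complex.abs ω)) (le_max_left _ _)
  intro t ht
  have habs : Complex.abs ((t:ℝ):ℂ) = |t| := Complex.abs_ofReal t
  have := aux_quot_bound ν α hν hα j hj ω (t:ℂ) (by simp) (by rwa [habs])
  rwa [habs, _root_.sq_abs] at this

lemma aux_base' (ν : ℝ) (hν : 0 < ν) (ω : ℂ) (hω : 0 < ω.im) :
    Integrable (fun t : ℝ => ((t:ℂ) - ω)⁻¹ * ((t:ℂ) + Complex.I * ν)⁻¹) ∧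
    ∫ t : ℝ, ((t:ℂ) - ω)⁻¹ * ((t:ℂ) + Complex.I * ν)⁻¹
      = 2 * Real.pi * Complex.I / (ω + Complex.I * ν) := by
  have hb : (-(Complex.I * (ν:ℂ))).im < 0 := by
    simp [hν]
  have h := aux_base ω (-(Complex.I * (ν:ℂ))) hω hb
  simp_rw [sub_neg_eq_add] at h
  exact h

/-- Cauchy integral of `R_{j,α}` for `j ≥ 1`, `α ≥ 0`: in the upper half-plane the
integrand is integrable and the Cauchy integral reproduces `R_{j,α}(ω)`; in the lower
half-plane the Cauchy integral vanishes. -/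
theorem cauchy_oscR_pos (ν : ℝ) (hν : 0 < ν) (j : ℤ) (hj : 1 ≤ j) (α : ℝ) (hα : 0 ≤ α) :
    (∀ ω : ℂ, 0 < ω.im →
      Integrable (fun t : ℝ => oscR ν α j (t : ℂ) / ((t : ℂ) - ω)) ∧
      (1 / (2 * (Real.pi : ℂ) * Complex.I)) *
        (∫ t : ℝ, oscR ν α j (t : ℂ) / ((t : ℂ) - ω)) = oscR ν α j ω) ∧
    (∀ ω : ℂ, ω.im < 0 →
      (1 / (2 * (Real.pi : ℂ) * Complex.I)) *
        (∫ t : ℝ, oscR ν α j (t : ℂ) / ((t : ℂ) - ω)) = 0) := by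
  have hj0 : (0:ℝ) ≤ (j:ℝ) := by exact_mod_cast le_trans zero_le_one hj
  have hopen : IsOpen {z : ℂ | -ν < z.im} := isOpen_lt continuous_const Complex.continuous_im
  constructor
  · -- upper half-plane
    intro ω hω
    have hωim : ω.im ≠ 0 := ne_of_gt hω
    have hint_main := aux_int_quot ν α hν hα j hj ω hωim
    refine ⟨hint_main, ?_⟩
    have hdenω : ω + Complex.I * ν ≠ 0 := aux_den_ne ν hν ω hω.le
    set c : ℂ := oscR ν α j ω * (ω + Complex.I * ν) with hc
    set F : ℂ → ℂ := fun z =>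
      oscR ν α j z - oscR ν α j ω * ((ω + Complex.I * ν) / (z + Complex.I * ν)) with hF
    have hFω : F ω = 0 := by
      rw [hF]; simp [div_self hdenω]
    set g : ℂ → ℂ := dslope F ω with hg
    have hne_t : ∀ t : ℝ, (t:ℂ) - ω ≠ 0 := aux_ne ω hωim
    have hden_t : ∀ t : ℝ, (t:ℂ) + Complex.I * ν ≠ 0 :=
      fun t => aux_den_ne ν hν t (by simp)
    have hgt : ∀ t : ℝ, g t = F t / ((t:ℂ) - ω) := by
      intro t
      have htω : (t:ℂ) ≠ ω := sub_ne_zero.mp (hne_t t)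
      rw [hg, dslope_of_ne F htω, slope_def_field, hFω, sub_zero]
    have hdiff_g : DifferentiableOn ℂ g {z : ℂ | -ν < z.im} := by
      rw [hg]
      apply (Complex.differentiableOn_dslope (hopen.mem_nhds (by simpa using by linarith : ω ∈ {z : ℂ | -ν < z.im}))).mpr
      intro z hz
      have hz' : -ν < z.im := hz
      have hden : z + Complex.I * ν ≠ 0 := by
        intro h
        have h2 := congrArg Complex.im h
        simp only [Complex.add_im, Complex.mul_im, Complex.I_re, Complex.I_im, Complex.ofReal_re,
          Complex.ofReal_im, Complex.zero_im] at h2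
        norm_num at h2
        linarith
      have h5 : DifferentiableAt ℂ
          (fun w : ℂ => oscR ν α j ω * ((ω + Complex.I * ν) / (w + Complex.I * ν))) z := by
        apply DifferentiableAt.const_mul
        exact DifferentiableAt.div (differentiableAt_const _)
          (differentiableAt_id.add_const _) hden
      exact (aux_oscR_diff ν α hν j hj z hz).sub h5.differentiableWithinAt
    set K : ℝ := ‖oscR ν α j ω‖ * Complex.abs (ω + Complex.I * ν) with hK
    have hK0 : 0 ≤ K := mul_nonneg (norm_nonneg _) (AbsoluteValue.nonneg _ _)
    set Cg : ℝ := 2 * (2 * j * ν + K) with hCg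
    set Mg : ℝ := max 1 (2 * Complex.abs ω) with hMg
    have hb_g : ∀ z : ℂ, 0 ≤ z.im → Mg ≤ Complex.abs z → ‖g z‖ ≤ Cg / Complex.abs z ^ 2 := by
      intro z him hM
      obtain ⟨hlow, h0, hzn, hzω⟩ := aux_half ω z hM
      have hgz : g z = F z / (z - ω) := by
        rw [hg, dslope_of_ne F hzω, slope_def_field, hFω, sub_zero]
      have hFz : ‖F z‖ ≤ (2 * j * ν + K) / Complex.abs z := by
        simp only [hF]
        refine le_trans (norm_sub_le _ _) ?_
        have e1 : ‖oscR ν α j z‖ ≤ 2 * j * ν / Complex.abs z :=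
          aux_f_bound ν α hν hα j hj z him hzn
        have e2 : ‖oscR ν α j ω * ((ω + Complex.I * ν) / (z + Complex.I * ν))‖
            ≤ K / Complex.abs z := by
          rw [norm_mul, norm_div, hK]
          have hle : Complex.abs z ≤ Complex.abs (z + Complex.I * ν) :=
            aux_abs_le_den ν hν z him
          rw [mul_div_assoc]
          apply mul_le_mul_of_nonneg_left _ (norm_nonneg _)
          rw [Complex.norm_eq_abs, Complex.norm_eq_abs]
          exact div_le_div_of_nonneg_left (AbsoluteValue.nonneg _ _) h0 hle
        calc ‖oscR ν α j z‖ + ‖oscR ν α j ω * ((ω + Complex.I * ν) / (z + Complex.I * ν))‖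
            ≤ 2 * j * ν / Complex.abs z + K / Complex.abs z := add_le_add e1 e2
        _ = (2 * j * ν + K) / Complex.abs z := (add_div _ _ _).symm
      rw [hgz, norm_div]
      have hnn : (0:ℝ) ≤ (2 * j * ν + K) / Complex.abs z := by
        apply div_nonneg (by nlinarith) h0.le
      calc ‖F z‖ / ‖z - ω‖ ≤ ((2 * j * ν + K) / Complex.abs z) / (Complex.abs z / 2) :=
        div_le_div₀ hnn hFz (by linarith) (by rwa [Complex.norm_eq_abs])
      _ = Cg / Complex.abs z ^ 2 := by
          rw [div_div_eq_mul_div, div_mul_eq_mul_div, div_div, hCg]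
          congr 1
          · ring
          · ring
    have hint_base := (aux_base' ν hν ω hω).1
    have hval_base := (aux_base' ν hν ω hω).2
    have he : (fun t : ℝ => g t) = fun t : ℝ =>
        oscR ν α j (t:ℂ) / ((t:ℂ) - ω) - c * (((t:ℂ) - ω)⁻¹ * ((t:ℂ) + Complex.I * ν)⁻¹) := by
      funext t
      rw [hgt t]
      simp only [hF, hc, div_eq_mul_inv]
      ring
    have hint_g : Integrable (fun t : ℝ => g t) := by
      rw [he]
      exact hint_main.sub (hint_base.const_mul c)
    have hCg0 : 0 ≤ Cg := by rw [hCg]; nlinarith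
    have hzero : ∫ t : ℝ, g t = 0 := aux_vanish g ν hν hdiff_g hint_g Cg Mg hCg0 hb_g
    have hsplit : (fun t : ℝ => oscR ν α j (t:ℂ) / ((t:ℂ) - ω)) = fun t : ℝ =>
        g t + c * (((t:ℂ) - ω)⁻¹ * ((t:ℂ) + Complex.I * ν)⁻¹) := by
      funext t
      rw [hgt t]
      simp only [hF, hc, div_eq_mul_inv]
      ring
    rw [hsplit, integral_add hint_g (hint_base.const_mul c), hzero, zero_add,
      MeasureTheory.integral_const_mul, hval_base, hc]
    have hπ : (Real.pi : ℂ) ≠ 0 := by exact_mod_cast Real.pi_ne_zero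
    field_simp
  · -- lower half-plane
    intro ω hω
    have hωim : ω.im ≠ 0 := ne_of_lt hω
    set d : ℝ := min ν (-ω.im) with hdd
    have hd : 0 < d := lt_min hν (by linarith)
    have hzero : ∫ t : ℝ, oscR ν α j (t:ℂ) / ((t:ℂ) - ω) = 0 := by
      refine aux_vanish (fun z : ℂ => oscR ν α j z / (z - ω)) d hd ?_
        (aux_int_quot ν α hν hα j hj ω hωim) (4 * j * ν)
        (max 1 (2 * Complex.abs ω)) (by nlinarith)
        (fun z him hM => aux_quot_bound ν α hν hα j hj ω z him hM)
      · intro z hz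
        have hz1 : -ν < z.im := by
          have : -d < z.im := hz
          have h2 : d ≤ ν := min_le_left _ _
          linarith
        have hzω : z - ω ≠ 0 := by
          intro h
          have h3 : z = ω := sub_eq_zero.mp h
          have : -d < z.im := hz
          have h4 : d ≤ -ω.im := min_le_right _ _
          rw [h3] at this
          linarith
        have h1 : DifferentiableAt ℂ (oscR ν α j) z :=
          (aux_oscR_diff ν α hν j hj).differentiableAt (hopen.mem_nhds hz1)
        exact (h1.div (differentiableAt_id.sub_const ω) hzω).differentiableWithinAt
    rw [hzero, mul_zero]
end

section
/- For an integer j ≥ 0, real (or complex) x, and a variable z, define p_j(z, x) = Σ_{n=1}^{j} L_{j−n}^{(n)}(x) · z^n (so p_0 = 0), where L_m^{(n)}(x) = Σ_{k=0}^{m} (−1)^k · binom(m + n, m − k) · x^k / k! and we set L_{−1}^{(1)}(x) := 0. Then for every integer j ≥ 1 and all z, x: p_j(z, x) = (1 + z) · p_{j−1}(z, x) + z · ( L_{j−1}^{(1)}(x) − L_{j−2}^{(1)}(x) ). -/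
/-- The generalized Laguerre polynomial
`L_m^{(n)}(x) = Σ_{k=0}^m (−1)^k binom(m+n, m−k) x^k / k!`. -/
noncomputable def lag (m n : ℕ) (x : ℂ) : ℂ :=
  ∑ k ∈ Finset.range (m + 1),
    (-1 : ℂ) ^ k * ((m + n).choose (m - k) : ℂ) * x ^ k / (Nat.factorial k : ℂ)

/-- `L_m^{(1)}` extended to integer index `m`, with value `0` for `m < 0`. -/
noncomputable def lagOneExt (m : ℤ) (x : ℂ) : ℂ :=
  if 0 ≤ m then lag m.toNat 1 x else 0

/-- `p_j(z,x) = Σ_{n=1}^j L_{j−n}^{(n)}(x) z^n`. -/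
noncomputable def lagP (j : ℕ) (z x : ℂ) : ℂ :=
  ∑ n ∈ Finset.Icc 1 j, lag (j - n) n x * z ^ n

lemma lag_zero (n : ℕ) (x : ℂ) : lag 0 n x = 1 := by
  simp [lag]

/-- The contiguous relation `L_{m+1}^{(n+1)} = L_{m+1}^{(n)} + L_m^{(n+1)}`. -/
lemma lag_rec (m n : ℕ) (x : ℂ) :
    lag (m + 1) (n + 1) x = lag (m + 1) n x + lag m (n + 1) x := by
  unfold lag
  rw [Finset.sum_range_succ, Finset.sum_range_succ
    (f := fun k => (-1 : ℂ) ^ k * (((m + 1) + n).choose (m + 1 - k) : ℂ) * x ^ k /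
      (Nat.factorial k : ℂ))]
  have hsum : ∑ k ∈ Finset.range (m + 1),
      (-1 : ℂ) ^ k * (((m + 1) + (n + 1)).choose (m + 1 - k) : ℂ) * x ^ k / (Nat.factorial k : ℂ)
      = ∑ k ∈ Finset.range (m + 1),
        ((-1 : ℂ) ^ k * (((m + 1) + n).choose (m + 1 - k) : ℂ) * x ^ k / (Nat.factorial k : ℂ)
          + (-1 : ℂ) ^ k * ((m + (n + 1)).choose (m - k) : ℂ) * x ^ k /
            (Nat.factorial k : ℂ)) := by
    refine Finset.sum_congr rfl fun k hk => ?_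
    have hk' : k ≤ m := by
      have := Finset.mem_range.mp hk; omega
    have hpc : ((m + 1) + (n + 1)).choose (m + 1 - k)
        = (m + (n + 1)).choose (m - k) + ((m + 1) + n).choose (m + 1 - k) := by
      have h1 : (m + 1) + (n + 1) = (m + n + 1) + 1 := by omega
      have h2 : m + 1 - k = (m - k) + 1 := by omega
      rw [h1, h2, Nat.choose_succ_succ']
      congr 2; omega
    rw [hpc]
    push_cast
    ring
  rw [hsum, Finset.sum_add_distrib]
  have h0 : m + 1 - (m + 1) = 0 := by omega
  simp only [h0, Nat.choose_zero_right]
  ring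

/-- `lagP` as a sum over `Finset.range`. -/
lemma lagP_range (j : ℕ) (z x : ℂ) :
    lagP j z x = ∑ i ∈ Finset.range j, lag (j - 1 - i) (1 + i) x * z ^ (1 + i) := by
  unfold lagP
  refine Finset.sum_nbij' (fun n => n - 1) (fun i => i + 1) ?_ ?_ ?_ ?_ ?_
  · intro n hn
    simp only [Finset.mem_Icc] at hn
    simp only [Finset.mem_range]; omega
  · intro i hi
    simp only [Finset.mem_range] at hi
    simp only [Finset.mem_Icc]; omega
  · intro n hn
    simp only [Finset.mem_Icc] at hn; omega
  · intro i _; omega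
  · intro n hn
    simp only [Finset.mem_Icc] at hn
    have h1 : j - 1 - (n - 1) = j - n := by omega
    have h2 : 1 + (n - 1) = n := by omega
    rw [h1, h2]

/-- The recurrence `p_j = (1+z) p_{j−1} + z (L_{j−1}^{(1)}(x) − L_{j−2}^{(1)}(x))`,
with the convention `L_{−1}^{(1)} = 0`. -/
theorem lagP_recurrence :
    ∀ (j : ℕ), 1 ≤ j → ∀ z x : ℂ,
      lagP j z x = (1 + z) * lagP (j - 1) z x +
        z * (lagOneExt ((j : ℤ) - 1) x - lagOneExt ((j : ℤ) - 2) x) := by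
  intro j hj z x
  obtain ⟨J, rfl⟩ : ∃ J, j = J + 1 := ⟨j - 1, by omega⟩
  cases J with
  | zero =>
      have h1 : lagOneExt ((1 : ℕ) - 1 : ℤ) x = lag 0 1 x := by
        norm_num [lagOneExt]
      have h2 : lagOneExt ((1 : ℕ) - 2 : ℤ) x = 0 := by
        norm_num [lagOneExt]
      rw [h1, h2, lag_zero]
      simp [lagP, Finset.Icc_self, lag_zero]
  | succ J =>
      have hE1 : lagOneExt ((J + 2 : ℕ) - 1 : ℤ) x = lag (J + 1) 1 x := by
        have h : ((J + 2 : ℕ) : ℤ) - 1 = ((J + 1 : ℕ) : ℤ) := by push_cast; ring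
        rw [h, lagOneExt, if_pos (Int.natCast_nonneg _)]
        simp
      have hE2 : lagOneExt ((J + 2 : ℕ) - 2 : ℤ) x = lag J 1 x := by
        have h : ((J + 2 : ℕ) : ℤ) - 2 = ((J : ℕ) : ℤ) := by push_cast; ring
        rw [h, lagOneExt, if_pos (Int.natCast_nonneg _)]
        simp
      have hsub : J + 1 + 1 - 1 = J + 1 := rfl
      rw [hsub, hE1, hE2, lagP_range, lagP_range]
      -- LHS: peel first term (i = 0) then last term (i = J)
      have eL : ∑ i ∈ Finset.range (J + 2), lag (J + 2 - 1 - i) (1 + i) x * z ^ (1 + i)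
          = (∑ i ∈ Finset.range J, lag (J - i) (2 + i) x * z ^ (2 + i))
            + z ^ (2 + J) + lag (J + 1) 1 x * z := by
        rw [Finset.sum_range_succ']
        have hcong : ∀ i ∈ Finset.range (J + 1),
            lag (J + 2 - 1 - (i + 1)) (1 + (i + 1)) x * z ^ (1 + (i + 1))
            = lag (J - i) (2 + i) x * z ^ (2 + i) := by
          intro i _
          have h1 : J + 2 - 1 - (i + 1) = J - i := by omega
          have h2 : 1 + (i + 1) = 2 + i := by omega
          rw [h1, h2]
        rw [Finset.sum_congr rfl hcong, Finset.sum_range_succ]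
        have h3 : J - J = 0 := by omega
        rw [h3, lag_zero]
        norm_num
      -- expand each term of the inner range-J sum using the contiguous relation
      have eK : ∑ i ∈ Finset.range J, lag (J - i) (2 + i) x * z ^ (2 + i)
          = ∑ i ∈ Finset.range J,
              (lag (J - i) (1 + i) x * z ^ (2 + i)
                + lag (J - 1 - i) (2 + i) x * z ^ (2 + i)) := by
        refine Finset.sum_congr rfl fun i hi => ?_
        have hi' : i < J := Finset.mem_range.mp hi
        have h1 : J - i = (J - 1 - i) + 1 := by omega
        have h2 : 2 + i = (1 + i) + 1 := by omega
        rw [h1, h2, lag_rec, ← h1, ← h2]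
        ring
      rw [eL, eK, Finset.sum_add_distrib]
      -- RHS: split (1+z) and peel appropriate terms
      have eR1 : ∑ i ∈ Finset.range (J + 1), lag (J + 1 - 1 - i) (1 + i) x * z ^ (1 + i)
          = (∑ i ∈ Finset.range J, lag (J - 1 - i) (2 + i) x * z ^ (2 + i))
            + lag J 1 x * z := by
        rw [Finset.sum_range_succ']
        have hcong : ∀ i ∈ Finset.range J,
            lag (J + 1 - 1 - (i + 1)) (1 + (i + 1)) x * z ^ (1 + (i + 1))
            = lag (J - 1 - i) (2 + i) x * z ^ (2 + i) := by
          intro i _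
          have h1 : J + 1 - 1 - (i + 1) = J - 1 - i := by omega
          have h2 : 1 + (i + 1) = 2 + i := by omega
          rw [h1, h2]
        rw [Finset.sum_congr rfl hcong]
        norm_num
      have eR2 : ∑ i ∈ Finset.range (J + 1), lag (J + 1 - 1 - i) (1 + i) x * z ^ (1 + i) * z
          = (∑ i ∈ Finset.range J, lag (J - i) (1 + i) x * z ^ (2 + i)) + z ^ (2 + J) := by
        rw [Finset.sum_range_succ]
        have hcong : ∀ i ∈ Finset.range J,
            lag (J + 1 - 1 - i) (1 + i) x * z ^ (1 + i) * z
            = lag (J - i) (1 + i) x * z ^ (2 + i) := by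
          intro i _
          have h1 : J + 1 - 1 - i = J - i := by omega
          have h2 : z ^ (1 + i) * z = z ^ (2 + i) := by
            rw [← pow_succ]; congr 1; omega
          rw [h1, mul_assoc, h2]
        rw [Finset.sum_congr rfl hcong]
        have h3 : J + 1 - 1 - J = 0 := by omega
        rw [h3, lag_zero]
        have h4 : (1 : ℂ) * z ^ (1 + J) * z = z ^ (2 + J) := by
          rw [one_mul, ← pow_succ]; congr 1; omega
        rw [h4]
      have expand : (1 + z) * (∑ i ∈ Finset.range (J + 1),
            lag (J + 1 - 1 - i) (1 + i) x * z ^ (1 + i))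
          = (∑ i ∈ Finset.range (J + 1), lag (J + 1 - 1 - i) (1 + i) x * z ^ (1 + i))
            + ∑ i ∈ Finset.range (J + 1),
                lag (J + 1 - 1 - i) (1 + i) x * z ^ (1 + i) * z := by
        rw [← Finset.sum_mul]; ring
      rw [expand, eR2]
      nth_rewrite 1 [eR1]
      ring
end
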